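/- arXiv:1803.07804 — 5 statements merged into one kernel-verified Lean document; each statement's English description precedes it below -/
import Mathlib

section
/- For all integers N ≥ 1 and n ≥ 1, C(N+n, N)^{−1} = ∑_{k=1}^{n} (−1)^k ∑_{i_1+⋯+i_k=n, i_1,…,i_k ≥ 1} (n!/(i_1!⋯i_k!)) · B_{N,i_1} ⋯ B_{N,i_k}, where the inner sum is over all compositions of n into k positive parts and C(a,b) denotes the binomial coefficient. -/
/-- The power series ∑_{i≥0} (N!/(N+i)!) xⁱ over ℚ. -/
noncomputable def hgSeries (N : ℕ) : PowerSeries ℚ :=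
  PowerSeries.mk fun i => (N.factorial : ℚ) / ((N + i).factorial : ℚ)

/-- The hypergeometric Bernoulli number `B_{N,n}`, defined so that
`∑ (B_{N,n}/n!) xⁿ` is the multiplicative inverse of `hgSeries N` in ℚ[[x]]. -/
noncomputable def hB (N n : ℕ) : ℚ :=
  (n.factorial : ℚ) * PowerSeries.coeff n (hgSeries N)⁻¹

open PowerSeries Finset

lemma coeff_pow_tuple (G : PowerSeries ℚ) (k n : ℕ) :
    PowerSeries.coeff n (G ^ k) =
      ∑ i ∈ Finset.Nat.antidiagonalTuple k n, ∏ j, PowerSeries.coeff (i j) G := by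
  have h : G ^ k = ∏ _j : Fin k, G := by simp
  rw [h, PowerSeries.coeff_prod]
  refine Finset.sum_nbij' (fun l => ⇑l) (fun i => Finsupp.equivFunOnFinite.symm i)
    ?_ ?_ ?_ ?_ ?_
  · intro l hl
    simp only [Finset.mem_finsuppAntidiag] at hl
    simp [Finset.Nat.mem_antidiagonalTuple, ← hl.1]
  · intro i hi
    simp only [Finset.Nat.mem_antidiagonalTuple] at hi
    simp [Finset.mem_finsuppAntidiag, ← hi]
  · intro l _; ext j; simp
  · intro i _; ext j; simp
  · intro l _; rfl

theorem stmt2 (N n : ℕ) (hN : 1 ≤ N) (hn : 1 ≤ n) :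
    (((N + n).choose N : ℚ))⁻¹ = ∑ k ∈ Finset.Icc 1 n, (-1 : ℚ) ^ k *
      ∑ i ∈ (Finset.Nat.antidiagonalTuple k n).filter (fun i => ∀ j, 1 ≤ i j),
        ((n.factorial : ℚ) / ∏ j, ((i j).factorial : ℚ)) * ∏ j, hB N (i j) := by
  set f := hgSeries N with hf
  set g := f⁻¹ with hg
  have hc : constantCoeff f = 1 := by
    have h0 : ((N.factorial : ℚ)) ≠ 0 := by exact_mod_cast N.factorial_pos.ne'
    simp [hf, hgSeries, ← coeff_zero_eq_constantCoeff, div_self h0]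
  have hcg : constantCoeff g = 1 := by
    rw [hg, constantCoeff_inv, hc, inv_one]
  set G := g - 1 with hG
  have hcG : constantCoeff G = 0 := by simp [hG, hcg]
  have hfg : f * g = 1 := PowerSeries.mul_inv_cancel f (by rw [hc]; exact one_ne_zero)
  have key : f = ∑ k ∈ Finset.range (n + 1), (-G) ^ k + f * (-G) ^ (n + 1) := by
    have h1 : (∑ k ∈ Finset.range (n + 1), (-G) ^ k) * (-G - 1) = (-G) ^ (n + 1) - 1 :=
      geom_sum_mul (-G) (n + 1)
    have h2 : -G - 1 = -g := by rw [hG]; ring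
    rw [h2] at h1
    linear_combination f * h1 + (∑ k ∈ Finset.range (n+1), (-G)^k) * hfg
  have hdvd : PowerSeries.coeff n (f * (-G) ^ (n + 1)) = 0 := by
    have : (X : PowerSeries ℚ) ^ (n + 1) ∣ f * (-G) ^ (n + 1) := by
      apply Dvd.dvd.mul_left
      exact pow_dvd_pow_of_dvd (PowerSeries.X_dvd_iff.mpr (by simp [hcG])) (n + 1)
    exact (PowerSeries.X_pow_dvd_iff.mp this) n (Nat.lt_succ_self n)
  have hcoef : PowerSeries.coeff n f =
      ∑ k ∈ Finset.range (n + 1), (-1 : ℚ) ^ k * PowerSeries.coeff n (G ^ k) := by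
    rw [key, map_add, hdvd, add_zero, map_sum]
    refine Finset.sum_congr rfl fun k _ => ?_
    rw [← neg_one_smul ℚ G, smul_pow, map_smul, smul_eq_mul]
  have hcoef2 : PowerSeries.coeff n f =
      ∑ k ∈ Finset.Icc 1 n, (-1 : ℚ) ^ k * PowerSeries.coeff n (G ^ k) := by
    rw [hcoef]
    symm
    apply Finset.sum_subset
    · intro k hk
      simp only [Finset.mem_Icc] at hk
      simp only [Finset.mem_range]; omega
    · intro k hk hk'
      simp only [Finset.mem_range] at hk
      simp only [Finset.mem_Icc, not_and, not_le] at hk'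
      have hk0 : k = 0 := by omega
      subst hk0
      simp [PowerSeries.coeff_one, Nat.one_le_iff_ne_zero.mp hn]
  have hGk : ∀ k, PowerSeries.coeff n (G ^ k) =
      ∑ i ∈ (Finset.Nat.antidiagonalTuple k n).filter (fun i => ∀ j, 1 ≤ i j),
        ∏ j, PowerSeries.coeff (i j) g := by
    intro k
    have h1 : ∑ i ∈ (Finset.Nat.antidiagonalTuple k n).filter (fun i => ∀ j, 1 ≤ i j),
          ∏ j, PowerSeries.coeff (i j) G
        = ∑ i ∈ Finset.Nat.antidiagonalTuple k n, ∏ j, PowerSeries.coeff (i j) G := by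
      apply Finset.sum_filter_of_ne
      intro i _ hne j
      by_contra hj
      push_neg at hj
      have hj0 : i j = 0 := by omega
      refine hne (Finset.prod_eq_zero (Finset.mem_univ j) ?_)
      rw [hj0, coeff_zero_eq_constantCoeff, hcG]
    rw [coeff_pow_tuple, ← h1]
    refine Finset.sum_congr rfl fun i hi => Finset.prod_congr rfl fun j _ => ?_
    simp only [Finset.mem_filter] at hi
    have h2 : i j ≠ 0 := Nat.one_le_iff_ne_zero.mp (hi.2 j)
    rw [hG]
    simp [PowerSeries.coeff_one, h2]
  -- now finish
  have hLHS : (((N + n).choose N : ℚ))⁻¹ = (n.factorial : ℚ) * PowerSeries.coeff n f := by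
    have hnat : (N + n).choose N * N.factorial * n.factorial = (N + n).factorial := by
      rw [Nat.choose_symm_add]
      have := Nat.add_choose_mul_factorial_mul_factorial N n
      omega
    have hfac : ((N + n).factorial : ℚ) ≠ 0 := by exact_mod_cast (N + n).factorial_pos.ne'
    have hNf : ((N.factorial : ℚ)) ≠ 0 := by exact_mod_cast N.factorial_pos.ne'
    have hnf : ((n.factorial : ℚ)) ≠ 0 := by exact_mod_cast n.factorial_pos.ne'
    have hcoefn : PowerSeries.coeff n f = (N.factorial : ℚ) / ((N + n).factorial : ℚ) := by
      simp [hf, hgSeries]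
    have hchoose : ((N + n).choose N : ℚ) =
        ((N + n).factorial : ℚ) / ((N.factorial : ℚ) * (n.factorial : ℚ)) := by
      field_simp
      exact_mod_cast hnat
    rw [hcoefn, hchoose, inv_div]
    field_simp
  rw [hLHS, hcoef2, Finset.mul_sum]
  refine Finset.sum_congr rfl fun k hk => ?_
  rw [hGk k, Finset.mul_sum, Finset.mul_sum]
  rw [mul_comm ((-1:ℚ)^k) _, Finset.sum_mul]
  refine Finset.sum_congr rfl fun i hi => ?_
  simp only [Finset.mem_filter] at hi
  have hprod : ∏ j, hB N (i j) =
      (∏ j, ((i j).factorial : ℚ)) * ∏ j, PowerSeries.coeff (i j) g := by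
    rw [← Finset.prod_mul_distrib]
    rfl
  have hpf : (∏ j, ((i j).factorial : ℚ)) ≠ 0 := by
    apply Finset.prod_ne_zero_iff.mpr
    intro j _
    exact_mod_cast (i j).factorial_pos.ne'
  rw [hprod]
  field_simp
end

section
/- Let p be a prime number, N ≥ 2 an integer, and n ≥ 0 an integer, and let t = v_p(N−1) be the p-adic valuation of N−1. Then (∏_{k=0}^{n} (N+k)!/N!) · B_{N,n} ≡ (∏_{k=0}^{n} (1+k)!) · B_n (mod p^t), i.e., the p-adic valuation of the difference of these two rational numbers is at least t. -/
open Finset PowerSeries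


lemma fact_ne (m : ℕ) : ((m.factorial : ℚ)) ≠ 0 := Nat.cast_ne_zero.2 (Nat.factorial_ne_zero _)

lemma factRatio (M : ℕ) {i n : ℕ} (h : i ≤ n) :
    ((M + n).factorial : ℚ) / ((M + i).factorial : ℚ)
      = ∏ j ∈ Finset.Ico (i + 1) (n + 1), ((M + j : ℕ) : ℚ) := by
  induction n, h using Nat.le_induction with
  | base => simp [div_self, Nat.factorial_ne_zero, Nat.cast_ne_zero]
  | succ n hn ih =>
    rw [Finset.prod_Ico_succ_top (by omega), ← ih]
    have h1 : ((M + n).factorial : ℚ) ≠ 0 := fact_ne _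
    have h2 : ((M + i).factorial : ℚ) ≠ 0 := fact_ne _
    have : (M + (n+1)).factorial = (M + n + 1) * (M + n).factorial := by
      rw [← Nat.add_assoc]; exact Nat.factorial_succ _
    rw [this]
    push_cast
    field_simp
    ring

lemma f_eq (M k : ℕ) : ((M + k).factorial : ℚ) / (M.factorial : ℚ)
    = ∏ j ∈ Finset.Ico 1 (k + 1), ((M + j : ℕ) : ℚ) := by
  have := factRatio M (Nat.zero_le k)
  rwa [Nat.add_zero] at this

/-- `P_M(n) = ∏_{k=0}^{n} (M+k)!/M!`. -/
noncomputable def PP (M n : ℕ) : ℚ :=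
  ∏ k ∈ Finset.range (n + 1), ((M + k).factorial : ℚ) / (M.factorial : ℚ)

/-- The integral coefficient in the recurrence. -/
noncomputable def KK (M n i : ℕ) : ℚ :=
  (n.descFactorial i : ℚ) * (∏ j ∈ Finset.Ico (i + 1) (n + 1), ((M + j : ℕ) : ℚ))
    * ∏ k ∈ Finset.Ico (n - i + 1) n, (((M + k).factorial : ℚ) / (M.factorial : ℚ))

lemma KK_id (M : ℕ) {n i : ℕ} (h1 : 1 ≤ i) (h2 : i ≤ n) :
    KK M n i * (PP M (n - i) * ((n - i).factorial : ℚ))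
      = PP M n * (n.factorial : ℚ) * ((M.factorial : ℚ) / ((M + i).factorial : ℚ)) := by
  have hd : ((n - i).factorial : ℚ) * (n.descFactorial i : ℚ) = (n.factorial : ℚ) := by
    rw [← Nat.cast_mul, Nat.factorial_mul_descFactorial h2]
  have hprod : PP M (n - i) * ∏ k ∈ Finset.Ico (n - i + 1) n,
      (((M + k).factorial : ℚ) / (M.factorial : ℚ))
      = ∏ k ∈ Finset.Ico 0 n, (((M + k).factorial : ℚ) / (M.factorial : ℚ)) := by
    rw [PP, Finset.range_eq_Ico]
    exact Finset.prod_Ico_consecutive _ (Nat.zero_le _) (by omega)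
  have hPPn : PP M n = (∏ k ∈ Finset.Ico 0 n, (((M + k).factorial : ℚ) / (M.factorial : ℚ)))
      * (((M + n).factorial : ℚ) / (M.factorial : ℚ)) := by
    rw [PP, Finset.range_eq_Ico, Finset.prod_Ico_succ_top (Nat.zero_le _)]
  have hfr : (∏ j ∈ Finset.Ico (i + 1) (n + 1), ((M + j : ℕ) : ℚ))
      = ((M + n).factorial : ℚ) / ((M + i).factorial : ℚ) := (factRatio M h2).symm
  rw [KK, hfr]
  calc (n.descFactorial i : ℚ) * (((M + n).factorial : ℚ) / ((M + i).factorial : ℚ))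
        * (∏ k ∈ Finset.Ico (n - i + 1) n, (((M + k).factorial : ℚ) / (M.factorial : ℚ)))
        * (PP M (n - i) * ((n - i).factorial : ℚ))
      = (((n - i).factorial : ℚ) * (n.descFactorial i : ℚ))
          * (((M + n).factorial : ℚ) / ((M + i).factorial : ℚ))
          * (PP M (n - i) * ∏ k ∈ Finset.Ico (n - i + 1) n,
              (((M + k).factorial : ℚ) / (M.factorial : ℚ))) := by ring
    _ = (n.factorial : ℚ) * (((M + n).factorial : ℚ) / ((M + i).factorial : ℚ))
          * ∏ k ∈ Finset.Ico 0 n, (((M + k).factorial : ℚ) / (M.factorial : ℚ)) := by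
        rw [hd, hprod]
    _ = PP M n * (n.factorial : ℚ) * ((M.factorial : ℚ) / ((M + i).factorial : ℚ)) := by
        rw [hPPn]
        field_simp

lemma hg_const (N : ℕ) : PowerSeries.constantCoeff (hgSeries N) = 1 := by
  rw [← PowerSeries.coeff_zero_eq_constantCoeff_apply, hgSeries, PowerSeries.coeff_mk]
  simp [div_self, Nat.factorial_ne_zero, Nat.cast_ne_zero]

lemma hB_zero (N : ℕ) : hB N 0 = 1 := by
  rw [hB, PowerSeries.coeff_zero_eq_constantCoeff_apply, PowerSeries.constantCoeff_inv, hg_const]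
  simp

lemma hg_recur (N n : ℕ) (hn : n ≠ 0) :
    ∑ i ∈ Finset.range (n + 1),
      ((N.factorial : ℚ) / ((N + i).factorial : ℚ)) *
        PowerSeries.coeff (n - i) (hgSeries N)⁻¹ = 0 := by
  have h1 : hgSeries N * (hgSeries N)⁻¹ = 1 :=
    PowerSeries.mul_inv_cancel _ (by rw [hg_const]; exact one_ne_zero)
  have h2 := congrArg (PowerSeries.coeff n) h1
  rw [PowerSeries.coeff_mul, PowerSeries.coeff_one, if_neg hn,
    Finset.Nat.sum_antidiagonal_eq_sum_range_succ_mk] at h2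
  simpa [hgSeries, PowerSeries.coeff_mk] using h2

lemma A_rec (M n : ℕ) (hn : n ≠ 0) :
    PP M n * hB M n
      = -∑ i ∈ Finset.Ico 1 (n + 1), KK M n i * (PP M (n - i) * hB M (n - i)) := by
  have h0 := hg_recur M n hn
  rw [Finset.range_eq_Ico, Finset.sum_eq_sum_Ico_succ_bot (Nat.succ_pos n)] at h0
  have hg0 : PowerSeries.coeff n (hgSeries M)⁻¹
      = -∑ i ∈ Finset.Ico 1 (n + 1),
          ((M.factorial : ℚ) / ((M + i).factorial : ℚ)) *
            PowerSeries.coeff (n - i) (hgSeries M)⁻¹ := by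
    have : (M.factorial : ℚ) / ((M + 0).factorial : ℚ) = 1 := by
      rw [Nat.add_zero]; exact div_self (fact_ne M)
    rw [this, one_mul, Nat.sub_zero] at h0
    linarith
  rw [hB, hg0]
  rw [mul_neg, mul_neg, neg_inj, Finset.mul_sum, Finset.mul_sum]
  refine Finset.sum_congr rfl fun i hi => ?_
  rw [Finset.mem_Ico] at hi
  obtain ⟨hi1, hi2⟩ := hi
  have hin : i ≤ n := by omega
  have key := KK_id M hi1 hin
  rw [hB]
  calc PP M n * ((n.factorial : ℚ) *
        (((M.factorial : ℚ) / ((M + i).factorial : ℚ)) *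
          PowerSeries.coeff (n - i) (hgSeries M)⁻¹))
      = (PP M n * (n.factorial : ℚ) * ((M.factorial : ℚ) / ((M + i).factorial : ℚ)))
          * PowerSeries.coeff (n - i) (hgSeries M)⁻¹ := by ring
    _ = (KK M n i * (PP M (n - i) * ((n - i).factorial : ℚ)))
          * PowerSeries.coeff (n - i) (hgSeries M)⁻¹ := by rw [key]
    _ = KK M n i * (PP M (n - i) * (((n - i).factorial : ℚ) *
          PowerSeries.coeff (n - i) (hgSeries M)⁻¹)) := by ring

lemma hB_one (n : ℕ) : hB 1 n = bernoulli n := by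
  have hX : (PowerSeries.exp ℚ - 1) = PowerSeries.X * hgSeries 1 := by
    ext m
    cases m with
    | zero => simp [PowerSeries.exp, PowerSeries.coeff_mk]
    | succ m =>
      rw [map_sub, PowerSeries.coeff_succ_X_mul, PowerSeries.coeff_one, if_neg (Nat.succ_ne_zero m)]
      simp only [hgSeries, PowerSeries.coeff_mk, PowerSeries.exp, Nat.factorial_one]
      simp [Nat.add_comm 1 m]
  have hmul : bernoulliPowerSeries ℚ * hgSeries 1 = 1 := by
    have h := bernoulliPowerSeries_mul_exp_sub_one ℚ
    rw [hX] at h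
    have h' : PowerSeries.X * (bernoulliPowerSeries ℚ * hgSeries 1) = PowerSeries.X * 1 := by
      rw [mul_one, show PowerSeries.X * (bernoulliPowerSeries ℚ * hgSeries 1)
          = bernoulliPowerSeries ℚ * (PowerSeries.X * hgSeries 1) from by ring, h]
    exact mul_left_cancel₀ PowerSeries.X_ne_zero h'
  have hinv : (hgSeries 1)⁻¹ = bernoulliPowerSeries ℚ := by
    rw [eq_comm, PowerSeries.eq_inv_iff_mul_eq_one (by rw [hg_const]; exact one_ne_zero)]
    exact hmul
  rw [hB, hinv, bernoulliPowerSeries, PowerSeries.coeff_mk]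
  simp only [Algebra.algebraMap_self, RingHom.id_apply, map_id]
  rw [mul_div_cancel₀]
  exact fact_ne _

section Padic

variable {p : ℕ} [hp : Fact p.Prime]

lemma norm_prod_le_one {ι : Type*} {s : Finset ι} {f : ι → ℚ}
    (h : ∀ i ∈ s, padicNorm p (f i) ≤ 1) : padicNorm p (∏ i ∈ s, f i) ≤ 1 := by
  classical
  induction s using Finset.induction_on with
  | empty => simp [padicNorm.one]
  | insert _ _ hx ih =>
    rw [Finset.prod_insert hx, padicNorm.mul]
    exact mul_le_one₀ (h _ (mem_insert_self _ _)) (padicNorm.nonneg _)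
      (ih fun i hi => h i (mem_insert_of_mem hi))

lemma close_mul {ε a a' b b' : ℚ}
    (ha : padicNorm p a ≤ 1) (hb' : padicNorm p b' ≤ 1)
    (h1 : padicNorm p (a - a') ≤ ε) (h2 : padicNorm p (b - b') ≤ ε) :
    padicNorm p (a * b - a' * b') ≤ ε := by
  have key : a * b - a' * b' = a * (b - b') + (a - a') * b' := by ring
  rw [key]
  refine le_trans padicNorm.nonarchimedean (max_le ?_ ?_)
  · rw [padicNorm.mul]
    calc padicNorm p a * padicNorm p (b - b') ≤ 1 * ε :=
          mul_le_mul ha h2 (padicNorm.nonneg _) zero_le_one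
      _ = ε := one_mul ε
  · rw [padicNorm.mul]
    calc padicNorm p (a - a') * padicNorm p b' ≤ ε * 1 :=
          mul_le_mul h1 hb' (padicNorm.nonneg _) (le_trans (padicNorm.nonneg _) h1)
      _ = ε := mul_one ε

lemma close_prod {ε : ℚ} (hε0 : 0 ≤ ε) {ι : Type*} {s : Finset ι} {f g : ι → ℚ}
    (hf : ∀ i ∈ s, padicNorm p (f i) ≤ 1) (hg : ∀ i ∈ s, padicNorm p (g i) ≤ 1)
    (hfg : ∀ i ∈ s, padicNorm p (f i - g i) ≤ ε) :
    padicNorm p ((∏ i ∈ s, f i) - ∏ i ∈ s, g i) ≤ ε := by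
  classical
  induction s using Finset.induction_on with
  | empty => simpa using hε0
  | insert _ _ hx ih =>
    rw [Finset.prod_insert hx, Finset.prod_insert hx]
    exact close_mul (hf _ (mem_insert_self _ _))
      (norm_prod_le_one fun i hi => hg i (mem_insert_of_mem hi))
      (hfg _ (mem_insert_self _ _))
      (ih (fun i hi => hf i (mem_insert_of_mem hi)) (fun i hi => hg i (mem_insert_of_mem hi))
        (fun i hi => hfg i (mem_insert_of_mem hi)))

lemma f_norm (M k : ℕ) : padicNorm p (((M + k).factorial : ℚ) / (M.factorial : ℚ)) ≤ 1 := by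
  rw [f_eq]
  exact norm_prod_le_one fun j _ => padicNorm.of_nat _

lemma KK_norm (M n i : ℕ) : padicNorm p (KK M n i) ≤ 1 := by
  rw [KK, padicNorm.mul, padicNorm.mul]
  refine mul_le_one₀ (mul_le_one₀ (padicNorm.of_nat _) (padicNorm.nonneg _)
    (norm_prod_le_one fun j _ => padicNorm.of_nat _)) (padicNorm.nonneg _)
    (norm_prod_le_one fun k _ => f_norm M k)

lemma KK_close {ε : ℚ} (hε0 : 0 ≤ ε) {N : ℕ}
    (hbase : padicNorm p ((N : ℚ) - 1) ≤ ε) (n i : ℕ) :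
    padicNorm p (KK N n i - KK 1 n i) ≤ ε := by
  have hdiff : ∀ j : ℕ, padicNorm p (((N + j : ℕ) : ℚ) - ((1 + j : ℕ) : ℚ)) ≤ ε := by
    intro j
    have : ((N + j : ℕ) : ℚ) - ((1 + j : ℕ) : ℚ) = (N : ℚ) - 1 := by push_cast; ring
    rwa [this]
  have hb : padicNorm p ((∏ j ∈ Finset.Ico (i + 1) (n + 1), ((N + j : ℕ) : ℚ))
      - ∏ j ∈ Finset.Ico (i + 1) (n + 1), ((1 + j : ℕ) : ℚ)) ≤ ε :=
    close_prod hε0 (fun j _ => padicNorm.of_nat _) (fun j _ => padicNorm.of_nat _)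
      (fun j _ => hdiff j)
  have hc : padicNorm p ((∏ k ∈ Finset.Ico (n - i + 1) n, (((N + k).factorial : ℚ) / (N.factorial : ℚ)))
      - ∏ k ∈ Finset.Ico (n - i + 1) n, (((1 + k).factorial : ℚ) / ((1 : ℕ).factorial : ℚ))) ≤ ε := by
    refine close_prod hε0 (fun k _ => f_norm N k) (fun k _ => f_norm 1 k) (fun k _ => ?_)
    rw [f_eq, f_eq]
    exact close_prod hε0 (fun j _ => padicNorm.of_nat _) (fun j _ => padicNorm.of_nat _)
      (fun j _ => hdiff j)
  rw [KK, KK]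
  refine close_mul ?_ ?_ ?_ hc
  · rw [padicNorm.mul]
    exact mul_le_one₀ (padicNorm.of_nat _) (padicNorm.nonneg _)
      (norm_prod_le_one fun j _ => padicNorm.of_nat _)
  · exact norm_prod_le_one fun k _ => f_norm 1 k
  · have key : (n.descFactorial i : ℚ) * (∏ j ∈ Finset.Ico (i + 1) (n + 1), ((N + j : ℕ) : ℚ))
        - (n.descFactorial i : ℚ) * (∏ j ∈ Finset.Ico (i + 1) (n + 1), ((1 + j : ℕ) : ℚ))
        = (n.descFactorial i : ℚ) * ((∏ j ∈ Finset.Ico (i + 1) (n + 1), ((N + j : ℕ) : ℚ))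
            - ∏ j ∈ Finset.Ico (i + 1) (n + 1), ((1 + j : ℕ) : ℚ)) := by ring
    rw [key, padicNorm.mul]
    calc padicNorm p (n.descFactorial i : ℚ) * padicNorm p _ ≤ 1 * ε :=
          mul_le_mul (padicNorm.of_nat _) hb (padicNorm.nonneg _) zero_le_one
      _ = ε := one_mul ε

lemma A_zero (M : ℕ) : PP M 0 * hB M 0 = 1 := by
  rw [hB_zero, mul_one, PP, Finset.prod_range_one, Nat.add_zero]
  exact div_self (fact_ne M)

lemma A_norm (M : ℕ) : ∀ n, padicNorm p (PP M n * hB M n) ≤ 1 := by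
  intro n
  induction n using Nat.strong_induction_on with
  | _ n ih =>
    rcases eq_or_ne n 0 with rfl | hn
    · rw [A_zero, padicNorm.one]
    · rw [A_rec M n hn, padicNorm.neg]
      refine padicNorm.sum_le' (fun i hi => ?_) zero_le_one
      rw [padicNorm.mul]
      have hi' := Finset.mem_Ico.1 hi
      exact mul_le_one₀ (KK_norm M n i) (padicNorm.nonneg _) (ih (n - i) (by omega))

lemma A_close {ε : ℚ} (hε0 : 0 ≤ ε) {N : ℕ}
    (hbase : padicNorm p ((N : ℚ) - 1) ≤ ε) :
    ∀ n, padicNorm p (PP N n * hB N n - PP 1 n * hB 1 n) ≤ ε := by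
  intro n
  induction n using Nat.strong_induction_on with
  | _ n ih =>
    rcases eq_or_ne n 0 with rfl | hn
    · rw [A_zero, A_zero, sub_self, padicNorm.zero]; exact hε0
    · rw [A_rec N n hn, A_rec 1 n hn, neg_sub_neg, ← Finset.sum_sub_distrib]
      refine padicNorm.sum_le' (fun i hi => ?_) hε0
      have hi' := Finset.mem_Ico.1 hi
      refine close_mul (KK_norm 1 n i) (A_norm N (n - i)) ?_ ?_
      · have : KK 1 n i - KK N n i = -(KK N n i - KK 1 n i) := by ring
        rw [this, padicNorm.neg]
        exact KK_close hε0 hbase n i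
      · have : PP 1 (n - i) * hB 1 (n - i) - PP N (n - i) * hB N (n - i)
            = -(PP N (n - i) * hB N (n - i) - PP 1 (n - i) * hB 1 (n - i)) := by ring
        rw [this, padicNorm.neg]
        exact ih (n - i) (by omega)

end Padic


/-- Kummer-type congruence: the p-adic valuation of the difference is at least
`t = v_p(N-1)`, expressed via the p-adic norm as `padicNorm p (A - B) ≤ p^(-t)`. -/
theorem stmt4 (p : ℕ) (hp : p.Prime) (N : ℕ) (hN : 2 ≤ N) (n : ℕ) :
    padicNorm p
        ((∏ k ∈ Finset.range (n + 1), ((N + k).factorial : ℚ) / (N.factorial : ℚ)) * hB N n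
          - (∏ k ∈ Finset.range (n + 1), ((1 + k).factorial : ℚ)) * bernoulli n)
      ≤ (p : ℚ) ^ (-(padicValNat p (N - 1) : ℤ)) := by
  haveI : Fact p.Prime := ⟨hp⟩
  set t := padicValNat p (N - 1) with ht
  set ε : ℚ := (p : ℚ) ^ (-(t : ℤ)) with hε
  have hp1 : (1 : ℚ) < (p : ℚ) := by exact_mod_cast hp.one_lt
  have hε0 : 0 ≤ ε := le_of_lt (zpow_pos (by linarith) _)
  have hbase : padicNorm p ((N : ℚ) - 1) ≤ ε := by
    have hdvd : ((p ^ t : ℕ) : ℤ) ∣ ((N - 1 : ℕ) : ℤ) :=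
      Int.natCast_dvd_natCast.2 pow_padicValNat_dvd
    have := padicNorm.dvd_iff_norm_le.1 hdvd
    have hcast : ((((N - 1 : ℕ) : ℤ)) : ℚ) = (N : ℚ) - 1 := by
      push_cast [Nat.cast_sub (by omega : 1 ≤ N)]
      ring
    rwa [hcast] at this
  have key := A_close hε0 hbase n
  have e2 : (∏ k ∈ Finset.range (n + 1), ((1 + k).factorial : ℚ)) * (bernoulli n : ℚ)
      = PP 1 n * hB 1 n := by
    rw [hB_one, PP]
    congr 1
    refine Finset.prod_congr rfl fun k _ => ?_
    norm_num [Nat.factorial_one]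
  rw [e2]
  exact key
end

section
/- For all integers N ≥ 1, r ≥ 1 and n ≥ 1, B^{(r)}_{N,n} = n! · ∑_{t_1 + 2t_2 + ⋯ + n t_n = n} ( (t_1+⋯+t_n)! / (t_1! ⋯ t_n!) ) · (−1)^{t_1+⋯+t_n} · M_r(1)^{t_1} M_r(2)^{t_2} ⋯ M_r(n)^{t_n}, where the sum is over all n-tuples (t_1,…,t_n) of nonnegative integers with t_1 + 2t_2 + ⋯ + n t_n = n. -/
/-- The higher order hypergeometric Bernoulli number `B^{(r)}_{N,n}`, defined so that
`∑ (B^{(r)}_{N,n}/n!) xⁿ` is the r-th power of the multiplicative inverse of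
`hgSeries N` in ℚ[[x]]. -/
noncomputable def hBr (N r n : ℕ) : ℚ :=
  (n.factorial : ℚ) * PowerSeries.coeff (R := ℚ) n ((hgSeries N)⁻¹ ^ r)

/-- `M_r(e) = ∑_{i₁+⋯+i_r=e} (N!)^r / ((N+i₁)! ⋯ (N+i_r)!)`. -/
noncomputable def M (N r e : ℕ) : ℚ :=
  ∑ i ∈ Finset.Nat.antidiagonalTuple r e,
    (N.factorial : ℚ) ^ r / ∏ j, ((N + i j).factorial : ℚ)

open Finset PowerSeries


lemma coeff_hg_pow (N r e : ℕ) :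
    PowerSeries.coeff e ((hgSeries N) ^ r) = M N r e := by
  have h1 : (hgSeries N) ^ r = ∏ _i : Fin r, hgSeries N := by
    simp [Finset.prod_const]
  rw [h1, PowerSeries.coeff_prod]
  unfold M
  refine Finset.sum_nbij' (fun l => (l : Fin r → ℕ))
    (fun i => Finsupp.equivFunOnFinite.symm i) ?_ ?_ ?_ ?_ ?_
  · intro l hl
    rw [Finset.mem_finsuppAntidiag] at hl
    rw [Finset.Nat.mem_antidiagonalTuple]
    exact hl.1
  · intro i hi
    rw [Finset.Nat.mem_antidiagonalTuple] at hi
    rw [Finset.mem_finsuppAntidiag]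
    constructor
    · simpa using hi
    · exact fun x _ => Finset.mem_univ x
  · intro l _; exact Finsupp.equivFunOnFinite.symm_apply_apply l
  · intro i _; exact Finsupp.equivFunOnFinite.apply_symm_apply i
  · intro l _
    simp only [hgSeries, PowerSeries.coeff_mk]
    rw [Finset.prod_div_distrib, Finset.prod_const, Finset.card_univ, Fintype.card_fin]

lemma M_zero (N r : ℕ) : M N r 0 = 1 := by
  unfold M
  rw [Finset.Nat.antidiagonalTuple_zero_right, Finset.sum_singleton]
  simp only [Pi.zero_apply, add_zero]
  rw [Finset.prod_const, Finset.card_univ, Fintype.card_fin, div_self]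
  positivity

lemma coeff_hp (n : ℕ) (c : Fin n → ℚ) (m : ℕ) :
    PowerSeries.coeff m (∑ j : Fin n, PowerSeries.C (c j) * PowerSeries.X ^ ((j : ℕ) + 1))
      = ∑ j : Fin n, if m = (j : ℕ) + 1 then c j else 0 := by
  rw [map_sum]
  refine Finset.sum_congr rfl fun j _ => ?_
  rw [PowerSeries.coeff_C_mul, PowerSeries.coeff_X_pow, mul_ite, mul_one, mul_zero]

lemma coeff_hp_zero (n : ℕ) (c : Fin n → ℚ) :
    PowerSeries.coeff 0 (∑ j : Fin n, PowerSeries.C (c j) * PowerSeries.X ^ ((j : ℕ) + 1))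
      = 0 := by
  rw [coeff_hp]
  exact Finset.sum_eq_zero fun j _ => by simp

lemma coeff_hp_succ (n : ℕ) (c : Fin n → ℚ) (k : ℕ) (hk : k < n) :
    PowerSeries.coeff (k + 1)
        (∑ j : Fin n, PowerSeries.C (c j) * PowerSeries.X ^ ((j : ℕ) + 1))
      = c ⟨k, hk⟩ := by
  rw [coeff_hp]
  rw [Finset.sum_eq_single (⟨k, hk⟩ : Fin n)]
  · simp
  · intro b _ hb
    rw [if_neg]
    intro hcon
    exact hb (Fin.ext (by simp only [Fin.val_mk]; omega))
  · intro hcon; exact absurd (Finset.mem_univ _) hcon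

lemma coeff_pow_hp (n : ℕ) (c : Fin n → ℚ) (k : ℕ) :
    PowerSeries.coeff n
        ((∑ j : Fin n, PowerSeries.C (c j) * PowerSeries.X ^ ((j : ℕ) + 1)) ^ k)
      = ∑ t ∈ Finset.piAntidiag Finset.univ k,
          if n = ∑ j : Fin n, ((j : ℕ) + 1) * t j then
            (Nat.multinomial Finset.univ t : ℚ) * ∏ j : Fin n, (c j) ^ (t j)
          else 0 := by
  rw [Finset.sum_pow_eq_sum_piAntidiag, map_sum]
  refine Finset.sum_congr rfl fun t _ => ?_
  have hprod : ∏ j : Fin n, (PowerSeries.C (c j) * PowerSeries.X ^ ((j : ℕ) + 1)) ^ (t j)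
      = PowerSeries.C (∏ j : Fin n, c j ^ t j)
        * PowerSeries.X ^ (∑ j : Fin n, ((j : ℕ) + 1) * t j) := by
    simp_rw [mul_pow, ← map_pow, ← pow_mul]
    rw [Finset.prod_mul_distrib, ← map_prod, Finset.prod_pow_eq_pow_sum]
  rw [hprod, ← map_natCast (PowerSeries.C (R := ℚ)) (Nat.multinomial Finset.univ t), ← mul_assoc,
    ← map_mul, PowerSeries.coeff_C_mul, PowerSeries.coeff_X_pow, mul_ite, mul_one, mul_zero]

set_option maxRecDepth 8000 in
/-- Trudi-type expression for `B^{(r)}_{N,n}`.  An n-tuple `(t₁,…,t_n)` with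
`t₁ + 2t₂ + ⋯ + n·t_n = n` is encoded as `t : Fin n → Fin (n+1)` (each `t_j ≤ n`
automatically since `j·t_j ≤ n`), with `t j` the multiplicity of `j+1`. -/
theorem stmt14 (N r n : ℕ) (hN : 1 ≤ N) (hr : 1 ≤ r) (hn : 1 ≤ n) :
    hBr N r n = (n.factorial : ℚ) *
      ∑ t ∈ Finset.univ.filter (fun t : Fin n → Fin (n + 1) =>
          ∑ j : Fin n, ((j : ℕ) + 1) * (t j : ℕ) = n),
        ((∑ j : Fin n, (t j : ℕ)).factorial : ℚ) / (∏ j : Fin n, ((t j : ℕ).factorial : ℚ)) *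
          (-1 : ℚ) ^ (∑ j : Fin n, (t j : ℕ)) *
          ∏ j : Fin n, (M N r ((j : ℕ) + 1)) ^ (t j : ℕ) := by
  classical
  set c : Fin n → ℚ := fun j : Fin n => -(M N r ((j : ℕ) + 1)) with hcdef
  set h' : PowerSeries ℚ :=
    ∑ j : Fin n, PowerSeries.C (c j) * PowerSeries.X ^ ((j : ℕ) + 1) with hh'
  set F : PowerSeries ℚ := ∑ k ∈ Finset.range (n + 1), h' ^ k with hF
  have hPg : (hgSeries N) ^ r * ((hgSeries N)⁻¹ ^ r) = 1 := by
    rw [← mul_pow, PowerSeries.mul_inv_cancel _ (by rw [hg_const]; norm_num), one_pow]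
  have hXh' : (PowerSeries.X : PowerSeries ℚ) ∣ h' := by
    rw [PowerSeries.X_dvd_iff]
    have h0 := coeff_hp_zero n c
    rw [← hh'] at h0
    simpa using h0
  have hdvd1 : (PowerSeries.X : PowerSeries ℚ) ^ (n + 1) ∣ h' ^ (n + 1) :=
    pow_dvd_pow_of_dvd hXh' _
  have hdvd2 : (PowerSeries.X : PowerSeries ℚ) ^ (n + 1) ∣ ((1 - h') - (hgSeries N) ^ r) := by
    rw [PowerSeries.X_pow_dvd_iff]
    intro m hm
    rw [map_sub, map_sub, coeff_hg_pow]
    match m, hm with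
    | 0, _ =>
      rw [hh', coeff_hp_zero, M_zero]
      simp
    | (k + 1), hm =>
      have hk : k < n := by omega
      rw [hh', coeff_hp_succ n c k hk, PowerSeries.coeff_one, if_neg (Nat.succ_ne_zero k)]
      simp [hcdef]
  have hgeom : (1 - h') * F = 1 - h' ^ (n + 1) := by
    rw [hF]; linear_combination - geom_sum_mul h' (n + 1)
  have hdkey : (PowerSeries.X : PowerSeries ℚ) ^ (n + 1) ∣ (1 - (hgSeries N) ^ r * F) := by
    have heq : 1 - (hgSeries N) ^ r * F
        = h' ^ (n + 1) + ((1 - h') - (hgSeries N) ^ r) * F := by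
      linear_combination -hgeom
    rw [heq]
    exact dvd_add hdvd1 (hdvd2.mul_right F)
  have hPF : PowerSeries.coeff n ((hgSeries N)⁻¹ ^ r) = PowerSeries.coeff n F := by
    have hsub : (hgSeries N)⁻¹ ^ r - F
        = ((hgSeries N)⁻¹ ^ r) * (1 - (hgSeries N) ^ r * F) := by
      rw [mul_sub, mul_one, ← mul_assoc, mul_comm ((hgSeries N)⁻¹ ^ r) ((hgSeries N) ^ r), hPg,
        one_mul]
    have hd : (PowerSeries.X : PowerSeries ℚ) ^ (n + 1) ∣ ((hgSeries N)⁻¹ ^ r - F) := by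
      rw [hsub]; exact hdkey.mul_left _
    have h0 := (PowerSeries.X_pow_dvd_iff.mp hd) n (Nat.lt_succ_self n)
    rw [map_sub, sub_eq_zero] at h0
    exact h0
  rw [hBr]
  congr 1
  rw [hPF, hF, map_sum]
  rw [Finset.sum_congr rfl fun k _ => (hh' ▸ coeff_pow_hp n c k :
    PowerSeries.coeff n (h' ^ k) = ∑ t ∈ Finset.piAntidiag Finset.univ k,
      if n = ∑ j : Fin n, ((j : ℕ) + 1) * t j then
        (Nat.multinomial Finset.univ t : ℚ) * ∏ j : Fin n, (c j) ^ (t j)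
      else 0)]
  rw [Finset.sum_sigma']
  rw [← Finset.sum_filter]
  refine Finset.sum_nbij'
    (fun σ => fun j : Fin n => (⟨min (σ.2 j) n, by omega⟩ : Fin (n + 1)))
    (fun t => ⟨∑ j : Fin n, (t j : ℕ), fun j => (t j : ℕ)⟩) ?_ ?_ ?_ ?_ ?_
  · -- forward membership
    intro σ hσ
    rw [Finset.mem_filter, Finset.mem_sigma, Finset.mem_piAntidiag] at hσ
    obtain ⟨⟨_, hsum, _⟩, hcond⟩ := hσ
    have hle : ∀ j : Fin n, σ.2 j ≤ n := by
      intro j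
      have h1 : ((j : ℕ) + 1) * σ.2 j ≤ ∑ x : Fin n, ((x : ℕ) + 1) * σ.2 x :=
        Finset.single_le_sum (f := fun x : Fin n => ((x : ℕ) + 1) * σ.2 x)
          (fun i _ => Nat.zero_le _) (Finset.mem_univ j)
      have h2 : σ.2 j ≤ ((j : ℕ) + 1) * σ.2 j := Nat.le_mul_of_pos_left _ (Nat.succ_pos _)
      omega
    rw [Finset.mem_filter]
    refine ⟨Finset.mem_univ _, ?_⟩
    show (∑ j : Fin n, ((j : ℕ) + 1) * min (σ.2 j) n) = n
    calc (∑ j : Fin n, ((j : ℕ) + 1) * min (σ.2 j) n)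
        = ∑ j : Fin n, ((j : ℕ) + 1) * σ.2 j :=
          Finset.sum_congr rfl fun j _ => by rw [min_eq_left (hle j)]
      _ = n := hcond.symm
  · -- backward membership
    intro t ht
    rw [Finset.mem_filter] at ht
    obtain ⟨_, hcond⟩ := ht
    have hbound : ∑ j : Fin n, (t j : ℕ) ≤ n := by
      calc ∑ j : Fin n, (t j : ℕ) ≤ ∑ j : Fin n, ((j : ℕ) + 1) * (t j : ℕ) :=
            Finset.sum_le_sum fun j _ => Nat.le_mul_of_pos_left _ (Nat.succ_pos _)
        _ = n := hcond
    simp only [Finset.mem_filter, Finset.mem_sigma, Finset.mem_piAntidiag, Finset.mem_range,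
      Finset.mem_univ, and_true, true_and]
    exact ⟨⟨by omega, fun i _ => trivial⟩, hcond.symm⟩
  · -- left inverse
    intro σ hσ
    rw [Finset.mem_filter, Finset.mem_sigma, Finset.mem_piAntidiag] at hσ
    obtain ⟨⟨_, hsum, _⟩, hcond⟩ := hσ
    have hle : ∀ j : Fin n, σ.2 j ≤ n := by
      intro j
      have h1 : ((j : ℕ) + 1) * σ.2 j ≤ ∑ x : Fin n, ((x : ℕ) + 1) * σ.2 x :=
        Finset.single_le_sum (f := fun x : Fin n => ((x : ℕ) + 1) * σ.2 x)
          (fun i _ => Nat.zero_le _) (Finset.mem_univ j)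
      have h2 : σ.2 j ≤ ((j : ℕ) + 1) * σ.2 j := Nat.le_mul_of_pos_left _ (Nat.succ_pos _)
      omega
    refine Sigma.ext ?_ (heq_of_eq ?_)
    · show (∑ j : Fin n, min (σ.2 j) n) = σ.1
      calc (∑ j : Fin n, min (σ.2 j) n) = ∑ j : Fin n, σ.2 j :=
            Finset.sum_congr rfl fun j _ => min_eq_left (hle j)
        _ = σ.1 := hsum
    · funext j
      show min (σ.2 j) n = σ.2 j
      exact min_eq_left (hle j)
  · -- right inverse
    intro t ht
    funext j
    apply Fin.ext
    show min ((t j : ℕ)) n = (t j : ℕ)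
    exact min_eq_left (Nat.lt_succ_iff.mp (t j).isLt)
  · -- values
    intro σ hσ
    rw [Finset.mem_filter, Finset.mem_sigma, Finset.mem_piAntidiag] at hσ
    obtain ⟨⟨_, hsum, _⟩, hcond⟩ := hσ
    have hle : ∀ j : Fin n, σ.2 j ≤ n := by
      intro j
      have h1 : ((j : ℕ) + 1) * σ.2 j ≤ ∑ x : Fin n, ((x : ℕ) + 1) * σ.2 x :=
        Finset.single_le_sum (f := fun x : Fin n => ((x : ℕ) + 1) * σ.2 x)
          (fun i _ => Nat.zero_le _) (Finset.mem_univ j)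
      have h2 : σ.2 j ≤ ((j : ℕ) + 1) * σ.2 j := Nat.le_mul_of_pos_left _ (Nat.succ_pos _)
      omega
    have hmin : ∀ j : Fin n, min (σ.2 j) n = σ.2 j := fun j => min_eq_left (hle j)
    have hmult : (Nat.multinomial Finset.univ σ.2 : ℚ)
        = ((∑ j : Fin n, σ.2 j).factorial : ℚ) / ∏ j : Fin n, ((σ.2 j).factorial : ℚ) := by
      rw [eq_div_iff (by positivity)]
      have hs := Nat.multinomial_spec (s := Finset.univ) (f := σ.2)
      push_cast [← hs]
      ring
    have hneg : ∏ j : Fin n, (c j) ^ (σ.2 j)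
        = (-1 : ℚ) ^ (∑ j : Fin n, σ.2 j) * ∏ j : Fin n, (M N r ((j : ℕ) + 1)) ^ (σ.2 j) := by
      calc ∏ j : Fin n, (c j) ^ (σ.2 j)
          = ∏ j : Fin n, ((-1 : ℚ) ^ (σ.2 j) * (M N r ((j : ℕ) + 1)) ^ (σ.2 j)) :=
            Finset.prod_congr rfl fun j _ => by
              rw [show c j = -(M N r ((j : ℕ) + 1)) from rfl, neg_pow]
        _ = (-1 : ℚ) ^ (∑ j : Fin n, σ.2 j)
              * ∏ j : Fin n, (M N r ((j : ℕ) + 1)) ^ (σ.2 j) := by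
            rw [Finset.prod_mul_distrib, Finset.prod_pow_eq_pow_sum]
    show (Nat.multinomial Finset.univ σ.2 : ℚ) * ∏ j : Fin n, (c j) ^ (σ.2 j)
      = ((∑ j : Fin n, min (σ.2 j) n).factorial : ℚ)
          / (∏ j : Fin n, ((min (σ.2 j) n).factorial : ℚ))
        * (-1 : ℚ) ^ (∑ j : Fin n, min (σ.2 j) n)
        * ∏ j : Fin n, (M N r ((j : ℕ) + 1)) ^ (min (σ.2 j) n)
    simp only [hmin]
    rw [hmult, hneg]
    ring
end

section
/- For all integers N ≥ 1, r ≥ 1 and n ≥ 1, M_r(n) = det(A), where A is the n×n matrix with entries A_{i,j} = (−1)^{i−j+1} · B^{(r)}_{N,i−j+1}/(i−j+1)! for 1 ≤ j ≤ i ≤ n, A_{i,i+1} = 1 for 1 ≤ i ≤ n−1, and A_{i,j} = 0 for j > i+1. -/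
private lemma M_eq_coeff (N r e : ℕ) : M N r e = PowerSeries.coeff (R := ℚ) e (hgSeries N ^ r) := by
  have h : hgSeries N ^ r = ∏ _j : Fin r, hgSeries N := by simp
  rw [h, PowerSeries.coeff_prod, M]
  refine Finset.sum_nbij' (fun i => Finsupp.equivFunOnFinite.symm i)
    (fun l => ⇑l) ?_ ?_ ?_ ?_ ?_
  · intro i hi
    rw [Finset.mem_finsuppAntidiag]
    refine ⟨?_, Finset.subset_univ _⟩
    rw [Finset.Nat.mem_antidiagonalTuple] at hi
    simpa using hi
  · intro l hl
    rw [Finset.mem_finsuppAntidiag] at hl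
    rw [Finset.Nat.mem_antidiagonalTuple]
    simpa using hl.1
  · intro i _; simp [Finsupp.equivFunOnFinite]; rfl
  · intro l _; simp
  · intro i hi
    simp only [hgSeries, PowerSeries.coeff_mk, Finsupp.coe_equivFunOnFinite_symm]
    rw [Finset.prod_div_distrib, Finset.prod_const]
    simp

private lemma const_hg (N : ℕ) : PowerSeries.constantCoeff (R := ℚ) (hgSeries N) = 1 := by
  simp only [hgSeries, PowerSeries.constantCoeff_mk, Nat.add_zero]
  rw [div_self]
  positivity

private lemma inv_mul (N : ℕ) : (hgSeries N)⁻¹ * hgSeries N = 1 := by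
  apply PowerSeries.inv_mul_cancel
  rw [const_hg]; norm_num

private lemma f_zero (N r : ℕ) : PowerSeries.coeff (R := ℚ) 0 (hgSeries N ^ r) = 1 := by
  rw [PowerSeries.coeff_zero_eq_constantCoeff, map_pow, const_hg, one_pow]

private lemma g_zero (N r : ℕ) : PowerSeries.coeff (R := ℚ) 0 ((hgSeries N)⁻¹ ^ r) = 1 := by
  rw [PowerSeries.coeff_zero_eq_constantCoeff, map_pow, PowerSeries.constantCoeff_inv, const_hg]
  norm_num

private lemma f_rec (N r n : ℕ) : PowerSeries.coeff (R := ℚ) (n+1) (hgSeries N ^ r) =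
    -∑ k ∈ Finset.range (n+1), PowerSeries.coeff (R := ℚ) (k+1) ((hgSeries N)⁻¹ ^ r) *
      PowerSeries.coeff (R := ℚ) (n-k) (hgSeries N ^ r) := by
  have hone : ((hgSeries N)⁻¹ ^ r) * (hgSeries N ^ r) = 1 := by
    rw [← mul_pow, inv_mul, one_pow]
  have h := congrArg (PowerSeries.coeff (R := ℚ) (n+1)) hone
  rw [PowerSeries.coeff_mul, PowerSeries.coeff_one] at h
  simp only [Nat.succ_ne_zero, if_false] at h
  rw [Finset.Nat.sum_antidiagonal_eq_sum_range_succ_mk, Finset.sum_range_succ'] at h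
  simp only [g_zero, one_mul, Nat.sub_zero] at h
  have heq : ∀ k, n + 1 - (k + 1) = n - k := fun k => by omega
  simp only [heq] at h
  linarith [h]

/-- The entry value `(-1)^m B^{(r)}_{N,m}/m!`. -/
private noncomputable def cSeq (N r m : ℕ) : ℚ := (-1:ℚ)^m * hBr N r m / (m.factorial : ℚ)

private lemma cSeq_eq (N r m : ℕ) :
    cSeq N r m = (-1:ℚ)^m * PowerSeries.coeff (R := ℚ) m ((hgSeries N)⁻¹ ^ r) := by
  rw [cSeq, hBr]
  have hm : (m.factorial : ℚ) ≠ 0 := by positivity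
  field_simp

/-- The n×n matrix of the statement. -/
private noncomputable def Amat (N r n : ℕ) : Matrix (Fin n) (Fin n) ℚ :=
  Matrix.of fun i j => if (j:ℕ) = (i:ℕ)+1 then 1
    else if (j:ℕ) ≤ (i:ℕ) then cSeq N r ((i:ℕ)-(j:ℕ)+1) else 0

private lemma val_succAbove {n : ℕ} (j : Fin (n+1)) (k : Fin n) :
    ((j.succAbove k : ℕ)) = if (k:ℕ) < (j:ℕ) then (k:ℕ) else (k:ℕ)+1 := by
  rcases lt_or_ge ((k:ℕ)) ((j:ℕ)) with h | h
  · rw [if_pos h, Fin.succAbove_of_castSucc_lt _ _ (by simpa [Fin.lt_def] using h)]; rfl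
  · rw [if_neg (by omega), Fin.succAbove_of_le_castSucc _ _ (by simpa [Fin.le_def] using h)]; rfl

private lemma minor_det (N r n : ℕ) (j : Fin (n+1)) :
    ((Amat N r (n+1)).submatrix Fin.castSucc j.succAbove).det = (Amat N r (j:ℕ)).det := by
  have hmn : (j:ℕ) ≤ n := Nat.lt_succ_iff.mp j.isLt
  have hadd : (j:ℕ) + (n - (j:ℕ)) = n := by omega
  let e : Fin (j:ℕ) ⊕ Fin (n-(j:ℕ)) ≃ Fin n := finSumFinEquiv.trans (finCongr hadd)
  have hel : ∀ b : Fin (j:ℕ), ((e (Sum.inl b) : ℕ)) = (b:ℕ) := by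
    intro b; simp [e]
  have her : ∀ a : Fin (n-(j:ℕ)), ((e (Sum.inr a) : ℕ)) = (j:ℕ) + (a:ℕ) := by
    intro a; simp [e]
  have hcl : ∀ b : Fin (j:ℕ), ((j.succAbove (e (Sum.inl b)) : ℕ)) = (b:ℕ) := by
    intro b; rw [val_succAbove, hel, if_pos b.isLt]
  have hcr : ∀ a : Fin (n-(j:ℕ)), ((j.succAbove (e (Sum.inr a)) : ℕ)) = (j:ℕ) + (a:ℕ) + 1 := by
    intro a; rw [val_succAbove, her, if_neg (by omega)]
  rw [← Matrix.det_submatrix_equiv_self e]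
  have key : ((Amat N r (n+1)).submatrix Fin.castSucc j.succAbove).submatrix e e =
      Matrix.fromBlocks (Amat N r (j:ℕ))
        0
        (Matrix.of fun (a : Fin (n-(j:ℕ))) (b : Fin (j:ℕ)) =>
          cSeq N r ((j:ℕ) + (a:ℕ) - (b:ℕ) + 1))
        (Matrix.of fun (a b : Fin (n-(j:ℕ))) =>
          if (b:ℕ) = (a:ℕ) then 1 else if (b:ℕ) < (a:ℕ) then cSeq N r ((a:ℕ)-(b:ℕ)) else 0) := by
    ext x y
    cases x with
    | inl xa => cases y with
      | inl ya =>
        simp only [Matrix.submatrix_apply, Matrix.fromBlocks_apply₁₁, Amat, Matrix.of_apply,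
          Fin.coe_castSucc, hel, hcl]
      | inr yb =>
        simp only [Matrix.submatrix_apply, Matrix.fromBlocks_apply₁₂, Amat, Matrix.of_apply,
          Fin.coe_castSucc, hel, hcr, Matrix.zero_apply]
        have hx : (xa:ℕ) < (j:ℕ) := xa.isLt
        rw [if_neg (by omega), if_neg (by omega)]
    | inr xb => cases y with
      | inl ya =>
        simp only [Matrix.submatrix_apply, Matrix.fromBlocks_apply₂₁, Amat, Matrix.of_apply,
          Fin.coe_castSucc, her, hcl]
        have hy : (ya:ℕ) < (j:ℕ) := ya.isLt
        rw [if_neg (by omega), if_pos (by omega)]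
      | inr yb =>
        simp only [Matrix.submatrix_apply, Matrix.fromBlocks_apply₂₂, Amat, Matrix.of_apply,
          Fin.coe_castSucc, her, hcr]
        by_cases hba : (yb:ℕ) = (xb:ℕ)
        · rw [if_pos (by omega), if_pos hba]
        · rw [if_neg (by omega), if_neg hba]
          by_cases hlt : (yb:ℕ) < (xb:ℕ)
          · rw [if_pos (by omega), if_pos hlt]
            congr 1
            omega
          · rw [if_neg (by omega), if_neg hlt]
  rw [key, Matrix.det_fromBlocks_zero₁₂]
  have hT : (Matrix.of fun (a b : Fin (n-(j:ℕ))) =>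
      if (b:ℕ) = (a:ℕ) then (1:ℚ) else if (b:ℕ) < (a:ℕ) then cSeq N r ((a:ℕ)-(b:ℕ)) else 0).det
        = 1 := by
    rw [Matrix.det_of_lowerTriangular]
    · simp
    · intro a b hab
      have h : (a:ℕ) < (b:ℕ) := hab
      simp only [Matrix.of_apply]
      rw [if_neg (by omega), if_neg (by omega)]
  rw [hT, mul_one]

private lemma det_eq_coeff (N r : ℕ) : ∀ n, (Amat N r n).det = PowerSeries.coeff (R := ℚ) n (hgSeries N ^ r) := by
  intro n
  induction n using Nat.strong_induction_on with
  | _ n ih =>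
    match n with
    | 0 => rw [Matrix.det_fin_zero, f_zero]
    | Nat.succ n =>
      rw [Matrix.det_succ_row (Amat N r (n+1)) (Fin.last n), f_rec]
      simp only [Fin.succAbove_last, minor_det]
      have hterm : ∀ j : Fin (n+1),
          (-1:ℚ)^((Fin.last n : ℕ) + (j:ℕ)) * Amat N r (n+1) (Fin.last n) j *
            (Amat N r (j:ℕ)).det
          = -(PowerSeries.coeff (R := ℚ) (n-(j:ℕ)+1) ((hgSeries N)⁻¹ ^ r) *
              PowerSeries.coeff (R := ℚ) (j:ℕ) (hgSeries N ^ r)) := by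
        intro j
        have hj : (j:ℕ) ≤ n := Nat.lt_succ_iff.mp j.isLt
        have hlast : ((Fin.last n : Fin (n+1)) : ℕ) = n := rfl
        have hentry : Amat N r (n+1) (Fin.last n) j = cSeq N r (n - (j:ℕ) + 1) := by
          simp only [Amat, Matrix.of_apply, hlast]
          rw [if_neg (by omega), if_pos hj]
        rw [hentry, cSeq_eq, ih _ j.isLt, hlast]
        have hsign : (-1:ℚ)^(n + (j:ℕ)) * ((-1:ℚ)^(n - (j:ℕ) + 1)) = -1 := by
          rw [← pow_add]
          have : n + (j:ℕ) + (n - (j:ℕ) + 1) = 2 * n + 1 := by omega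
          rw [this, pow_succ, pow_mul]
          norm_num
        calc (-1:ℚ)^(n + (j:ℕ)) * ((-1:ℚ)^(n - (j:ℕ) + 1) *
              PowerSeries.coeff (R := ℚ) (n-(j:ℕ)+1) ((hgSeries N)⁻¹ ^ r)) *
              PowerSeries.coeff (R := ℚ) (j:ℕ) (hgSeries N ^ r)
            = ((-1:ℚ)^(n + (j:ℕ)) * (-1:ℚ)^(n - (j:ℕ) + 1)) *
              (PowerSeries.coeff (R := ℚ) (n-(j:ℕ)+1) ((hgSeries N)⁻¹ ^ r) *
               PowerSeries.coeff (R := ℚ) (j:ℕ) (hgSeries N ^ r)) := by ring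
          _ = -(PowerSeries.coeff (R := ℚ) (n-(j:ℕ)+1) ((hgSeries N)⁻¹ ^ r) *
               PowerSeries.coeff (R := ℚ) (j:ℕ) (hgSeries N ^ r)) := by rw [hsign]; ring
      rw [Finset.sum_congr rfl (fun j _ => hterm j)]
      rw [Fin.sum_univ_eq_sum_range
        (fun j => -(PowerSeries.coeff (R := ℚ) (n-j+1) ((hgSeries N)⁻¹ ^ r) *
          PowerSeries.coeff (R := ℚ) j (hgSeries N ^ r)))]
      rw [← Finset.sum_range_reflect
        (fun j => -(PowerSeries.coeff (R := ℚ) (n-j+1) ((hgSeries N)⁻¹ ^ r) *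
          PowerSeries.coeff (R := ℚ) j (hgSeries N ^ r))) (n+1)]
      rw [← Finset.sum_neg_distrib]
      refine Finset.sum_congr rfl fun k hk => ?_
      rw [Finset.mem_range] at hk
      have h1 : n + 1 - 1 - k = n - k := by omega
      have h2 : n - (n - k) + 1 = k + 1 := by omega
      rw [h1, h2]

/-- Inversion: determinant expression for `M_r(n)` in terms of `B^{(r)}_{N,k}`.
Rows and columns are 0-indexed: the (i,j) entry with j ≤ i is
`(-1)^(i-j+1) B^{(r)}_{N,i-j+1}/(i-j+1)!`, the superdiagonal entries are 1,
and all other entries are 0. -/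
theorem stmt15 (N r n : ℕ) (hN : 1 ≤ N) (hr : 1 ≤ r) (hn : 1 ≤ n) :
    M N r n =
      (Matrix.of fun i j : Fin n =>
        if (j : ℕ) = (i : ℕ) + 1 then (1 : ℚ)
        else if (j : ℕ) ≤ (i : ℕ) then
          (-1 : ℚ) ^ ((i : ℕ) - (j : ℕ) + 1) * hBr N r ((i : ℕ) - (j : ℕ) + 1) /
            (((i : ℕ) - (j : ℕ) + 1).factorial : ℚ)
        else 0).det := by
  have : (Matrix.of fun i j : Fin n =>
        if (j : ℕ) = (i : ℕ) + 1 then (1 : ℚ)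
        else if (j : ℕ) ≤ (i : ℕ) then
          (-1 : ℚ) ^ ((i : ℕ) - (j : ℕ) + 1) * hBr N r ((i : ℕ) - (j : ℕ) + 1) /
            (((i : ℕ) - (j : ℕ) + 1).factorial : ℚ)
        else 0) = Amat N r n := rfl
  rw [this, det_eq_coeff, M_eq_coeff]
end

section
/- For all integers N ≥ 1 and n ≥ 1, B_{N,n} = n! · ∑_{t_1 + 2t_2 + ⋯ + n t_n = n} ( (t_1+⋯+t_n)! / (t_1! ⋯ t_n!) ) · (−1)^{t_1+⋯+t_n} · (N!/(N+1)!)^{t_1} (N!/(N+2)!)^{t_2} ⋯ (N!/(N+n)!)^{t_n}, where the sum is over all n-tuples (t_1,…,t_n) of nonnegative integers with t_1 + 2t_2 + ⋯ + n t_n = n. -/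
open PowerSeries Finset


/-- Trudi-type expression for `B_{N,n}`.  An n-tuple `(t₁,…,t_n)` with
`t₁ + 2t₂ + ⋯ + n·t_n = n` is encoded as `t : Fin n → Fin (n+1)` (each `t_j ≤ n`
automatically since `j·t_j ≤ n`), with `t j` the multiplicity of `j+1`. -/
theorem stmt16 (N n : ℕ) (hN : 1 ≤ N) (hn : 1 ≤ n) :
    hB N n = (n.factorial : ℚ) *
      ∑ t ∈ Finset.univ.filter (fun t : Fin n → Fin (n + 1) =>
          ∑ j : Fin n, ((j : ℕ) + 1) * (t j : ℕ) = n),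
        ((∑ j : Fin n, (t j : ℕ)).factorial : ℚ) / (∏ j : Fin n, ((t j : ℕ).factorial : ℚ)) *
          (-1 : ℚ) ^ (∑ j : Fin n, (t j : ℕ)) *
          ∏ j : Fin n,
            ((N.factorial : ℚ) / ((N + (j : ℕ) + 1).factorial : ℚ)) ^ (t j : ℕ) := by
  classical
  set a : ℕ → ℚ := fun i => (N.factorial : ℚ) / ((N + i).factorial : ℚ) with ha
  set G := hgSeries N with hG
  have hG0 : constantCoeff G = 1 := by
    simp [hG, hgSeries, ← coeff_zero_eq_constantCoeff_apply, div_self,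
      Nat.cast_ne_zero.2 N.factorial_ne_zero]
  set u : ℚ⟦X⟧ := 1 - G with hu
  have hXu : (X : ℚ⟦X⟧) ∣ u := X_dvd_iff.2 (by simp [hu, hG0])
  set P : ℚ⟦X⟧ := ∑ j : Fin n, (C (-(a ((j : ℕ) + 1))) * X ^ ((j : ℕ) + 1)) with hP
  have hcoeffP : ∀ m : ℕ, coeff m P =
      ∑ j : Fin n, (-(a ((j : ℕ) + 1))) * (if m = (j : ℕ) + 1 then 1 else 0) := by
    intro m
    simp only [hP, map_sum, coeff_C_mul, coeff_X_pow]
  have hdvd : (X : ℚ⟦X⟧) ^ (n + 1) ∣ u - P := by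
    rw [X_pow_dvd_iff]
    intro m hm
    rw [map_sub, hcoeffP]
    rcases Nat.eq_zero_or_pos m with rfl | hm1
    · simp [hu, hG, hgSeries, div_self, Nat.cast_ne_zero.2 N.factorial_ne_zero]
    · obtain ⟨M, rfl⟩ := Nat.exists_eq_add_of_lt hm1
      rw [Finset.sum_eq_single (⟨M, by omega⟩ : Fin n)]
      · simp [hu, hG, hgSeries, ha, Nat.zero_add]
      · intro b _ hb
        have hbM : (b : ℕ) ≠ M := fun h => hb (Fin.ext (by simp [h]))
        simp [Ne.symm hbM]
      · simp
  have hcoeff_uP : ∀ k : ℕ, coeff n (u ^ k) = coeff n (P ^ k) := by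
    intro k
    have h1 : (X : ℚ⟦X⟧) ^ (n + 1) ∣ u ^ k - P ^ k :=
      dvd_trans hdvd (sub_dvd_pow_sub_pow u P k)
    have h2 := (X_pow_dvd_iff.1 h1) n (Nat.lt_succ_self n)
    rw [map_sub, sub_eq_zero] at h2
    exact h2
  have hGinv : G * G⁻¹ = 1 :=
    PowerSeries.mul_inv_cancel _ (by rw [hG0]; exact one_ne_zero)
  have hG' : G = 1 - u := by rw [hu]; ring
  have hgeom : G * (∑ k ∈ range (n + 1), u ^ k) = 1 - u ^ (n + 1) := by
    rw [hG', mul_comm]; exact geom_sum_mul_neg u (n + 1)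
  have hsplit : coeff n G⁻¹ = ∑ k ∈ range (n + 1), coeff n (u ^ k) := by
    have hid : G⁻¹ = (∑ k ∈ range (n + 1), u ^ k) + G⁻¹ * u ^ (n + 1) := by
      calc G⁻¹ = G⁻¹ * (G * (∑ k ∈ range (n + 1), u ^ k) + u ^ (n + 1)) := by
            rw [hgeom]; ring
        _ = (G * G⁻¹) * (∑ k ∈ range (n + 1), u ^ k) + G⁻¹ * u ^ (n + 1) := by ring
        _ = _ := by rw [hGinv]; ring
    have hz : coeff n (G⁻¹ * u ^ (n + 1)) = 0 := by
      have hd : (X : ℚ⟦X⟧) ^ (n + 1) ∣ G⁻¹ * u ^ (n + 1) :=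
        Dvd.dvd.mul_left (pow_dvd_pow_of_dvd hXu (n + 1)) _
      exact (X_pow_dvd_iff.1 hd) n (Nat.lt_succ_self n)
    rw [hid, map_add, map_sum, hz, add_zero]
  have hB2 : ∀ k : ℕ, coeff n (P ^ k) =
      ∑ t ∈ (piAntidiag (univ : Finset (Fin n)) k).filter
          (fun t => ∑ j : Fin n, ((j : ℕ) + 1) * t j = n),
        (Nat.multinomial univ t : ℚ) * ∏ j : Fin n, (-(a ((j : ℕ) + 1))) ^ (t j) := by
    intro k
    rw [hP, Finset.sum_pow_eq_sum_piAntidiag, map_sum, Finset.sum_filter]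
    refine Finset.sum_congr rfl fun t ht => ?_
    have hprod : ∏ j : Fin n, ((C (R := ℚ)) (-(a ((j : ℕ) + 1))) * X ^ ((j : ℕ) + 1)) ^ t j
        = C (∏ j : Fin n, (-(a ((j : ℕ) + 1))) ^ t j)
            * X ^ (∑ j : Fin n, ((j : ℕ) + 1) * t j) := by
      simp only [mul_pow, ← map_pow, ← pow_mul]
      rw [Finset.prod_mul_distrib, map_prod, Finset.prod_pow_eq_pow_sum]
    rw [hprod, ← map_natCast (C (R := ℚ)) (Nat.multinomial univ t), ← mul_assoc, ← map_mul,
      coeff_C_mul, coeff_X_pow]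
    by_cases h : ∑ j : Fin n, ((j : ℕ) + 1) * t j = n
    · simp [h]
    · simp [h, Ne.symm h]
  have hmul : ∀ (t : Fin n → ℕ),
      (Nat.multinomial (univ : Finset (Fin n)) t : ℚ) =
        ((∑ j : Fin n, t j).factorial : ℚ) / ∏ j : Fin n, ((t j).factorial : ℚ) := by
    intro t
    have hs := Nat.multinomial_spec (univ : Finset (Fin n)) t
    have hne : (∏ j : Fin n, ((t j).factorial : ℚ)) ≠ 0 :=
      Finset.prod_ne_zero_iff.2 fun j _ => Nat.cast_ne_zero.2 (t j).factorial_ne_zero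
    rw [eq_div_iff hne]
    push_cast [← hs]
    ring
  unfold hB
  congr 1
  rw [← hG, hsplit]
  simp only [hcoeff_uP, hB2]
  rw [Finset.sum_sigma']
  set Sg := (range (n + 1)).sigma (fun k => (piAntidiag (univ : Finset (Fin n)) k).filter
      (fun t => ∑ j : Fin n, ((j : ℕ) + 1) * t j = n)) with hSg
  have hbound : ∀ p ∈ Sg, ∀ j : Fin n, p.2 j < n + 1 := by
    intro p hp j
    rw [hSg, Finset.mem_sigma, Finset.mem_filter] at hp
    have h1 : ((j : ℕ) + 1) * p.2 j ≤ ∑ i : Fin n, ((i : ℕ) + 1) * p.2 i :=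
      Finset.single_le_sum (f := fun i : Fin n => ((i : ℕ) + 1) * p.2 i)
        (fun i _ => Nat.zero_le _) (Finset.mem_univ j)
    have h2 : p.2 j ≤ ((j : ℕ) + 1) * p.2 j := Nat.le_mul_of_pos_left _ (Nat.succ_pos _)
    omega
  refine Finset.sum_bij' (fun p hp => fun j : Fin n => (⟨p.2 j, hbound p hp j⟩ : Fin (n + 1)))
    (fun t _ => (⟨∑ j : Fin n, (t j : ℕ), fun j => (t j : ℕ)⟩ : (_ : ℕ) × (Fin n → ℕ)))
    ?_ ?_ ?_ ?_ ?_
  · intro p hp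
    rw [hSg, Finset.mem_sigma, Finset.mem_filter] at hp
    rw [Finset.mem_filter]
    exact ⟨Finset.mem_univ _, hp.2.2⟩
  · intro t ht
    rw [Finset.mem_filter] at ht
    rw [hSg, Finset.mem_sigma, Finset.mem_filter, mem_piAntidiag]
    refine ⟨?_, ⟨rfl, fun i _ => Finset.mem_univ i⟩, ht.2⟩
    rw [Finset.mem_range]
    have h1 : ∑ j : Fin n, (t j : ℕ) ≤ ∑ j : Fin n, ((j : ℕ) + 1) * (t j : ℕ) :=
      Finset.sum_le_sum fun j _ => Nat.le_mul_of_pos_left ((t j : ℕ)) (Nat.succ_pos (j : ℕ))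
    have h2 := ht.2
    exact Nat.lt_succ_of_le (le_of_le_of_eq h1 h2)
  · intro p hp
    have hp' := hp
    rw [hSg, Finset.mem_sigma, Finset.mem_filter, mem_piAntidiag] at hp'
    refine Sigma.ext ?_ (heq_of_eq ?_)
    · simpa using hp'.2.1.1
    · rfl
  · intro t ht
    funext j
    exact Fin.ext rfl
  · intro p hp
    simp only
    rw [hmul]
    have hneg : ∏ j : Fin n, (-(a ((j : ℕ) + 1))) ^ (p.2 j)
        = (-1 : ℚ) ^ (∑ j : Fin n, p.2 j) * ∏ j : Fin n, (a ((j : ℕ) + 1)) ^ (p.2 j) := by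
      rw [← Finset.prod_pow_eq_pow_sum, ← Finset.prod_mul_distrib]
      exact Finset.prod_congr rfl fun j _ => by rw [neg_pow]
    rw [hneg]
    have haj : ∀ j : Fin n, a ((j : ℕ) + 1)
        = (N.factorial : ℚ) / ((N + (j : ℕ) + 1).factorial : ℚ) := by
      intro j
      simp [ha, Nat.add_assoc]
    simp only [haj]
    ring
end
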